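/- Let P : ℂⁿ → ℂ be an m-homogeneous polynomial, i ∈ {1,...,n}^m, and 2 ≤ k ≤ m. If max{i₁,...,i_{k−1}} ≤ i_k, then c_i(S_{k−1} L_P) = (k / |{1 ≤ u ≤ k : i_u = i_k}|) · c_i(S_k L_P); otherwise c_i(S_{k−1} L_P) = 0. -/

import Mathlib

/-- The (non-symmetric) `m`-form associated to a coefficient array `c`
(supported on nondecreasing multi-indices). -/
noncomputable def LP (n m : ℕ) (c : (Fin m → Fin n) → ℂ) : (Fin m → (Fin n → ℂ)) → ℂ :=
  fun x => ∑ j : Fin m → Fin n, c j * ∏ k : Fin m, x k (j k)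

/-- Partial symmetrization over the first `k` arguments. -/
noncomputable def partialSym (n m k : ℕ) (L : (Fin m → (Fin n → ℂ)) → ℂ) :
    (Fin m → (Fin n → ℂ)) → ℂ :=
  fun x => (Nat.factorial k : ℂ)⁻¹ *
    ∑ σ ∈ Finset.univ.filter
        (fun σ : Equiv.Perm (Fin m) => ∀ i : Fin m, k ≤ (i : ℕ) → σ i = i),
      L (fun u => x (σ u))

/-- The coefficient `c_i(L) = L(e_{i₁},…,e_{i_m})` of an `m`-form. -/
noncomputable def coeff (n m : ℕ) (L : (Fin m → (Fin n → ℂ)) → ℂ) (i : Fin m → Fin n) : ℂ :=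
  L (fun k => Pi.single (i k) 1)

lemma LP_single (n m : ℕ) (c : (Fin m → Fin n) → ℂ) (j : Fin m → Fin n) :
    LP n m c (fun u => Pi.single (j u) (1:ℂ)) = c j := by
  unfold LP
  rw [Finset.sum_eq_single j]
  · simp
  · intro b _ hb
    obtain ⟨u, hu⟩ : ∃ u, b u ≠ j u := by
      by_contra h; push_neg at h; exact hb (funext h)
    apply mul_eq_zero_of_right
    apply Finset.prod_eq_zero (Finset.mem_univ u)
    exact Pi.single_eq_of_ne hu 1
  · intro h; exact absurd (Finset.mem_univ j) h

lemma coeff_partialSym (n m K : ℕ) (c : (Fin m → Fin n) → ℂ) (i : Fin m → Fin n) :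
    coeff n m (partialSym n m K (LP n m c)) i =
      (Nat.factorial K : ℂ)⁻¹ *
        ∑ σ ∈ Finset.univ.filter
            (fun σ : Equiv.Perm (Fin m) => ∀ u : Fin m, K ≤ (u : ℕ) → σ u = u),
          c (fun u => i (σ u)) := by
  unfold coeff partialSym
  congr 1
  refine Finset.sum_congr rfl fun σ _ => ?_
  exact LP_single n m c (fun u => i (σ u))

/-- For `2 ≤ k ≤ m` and `i ∈ {1,…,n}^m`: if `max{i₁,…,i_{k−1}} ≤ i_k` then
`c_i(S_{k−1} L_P) = (k / |{1 ≤ u ≤ k : i_u = i_k}|) · c_i(S_k L_P)`;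
otherwise `c_i(S_{k−1} L_P) = 0`. -/
theorem coeff_partialSym_step (n m k : ℕ) (hk2 : 2 ≤ k) (hkm : k ≤ m)
    (c : (Fin m → Fin n) → ℂ)
    (hc : ∀ j : Fin m → Fin n, ¬ Monotone j → c j = 0)
    (i : Fin m → Fin n) :
    (((∀ u : Fin m, (u : ℕ) < k - 1 → i u ≤ i ⟨k - 1, by omega⟩) →
      coeff n m (partialSym n m (k - 1) (LP n m c)) i =
        ((k : ℂ) /
          ((Finset.univ.filter fun u : Fin m =>
              (u : ℕ) < k ∧ i u = i ⟨k - 1, by omega⟩).card : ℂ)) *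
          coeff n m (partialSym n m k (LP n m c)) i) ∧
    ((¬ ∀ u : Fin m, (u : ℕ) < k - 1 → i u ≤ i ⟨k - 1, by omega⟩) →
      coeff n m (partialSym n m (k - 1) (LP n m c)) i = 0)) := by
  obtain ⟨k', rfl⟩ : ∃ k', k = k' + 1 := ⟨k - 1, by omega⟩
  have hk1 : 1 ≤ k' := by omega
  have hpm : k' < m := by omega
  set p : Fin m := ⟨k', hpm⟩ with hpdef
  constructor
  · intro hmono
    have hmono' : ∀ u : Fin m, (u : ℕ) < k' → i u ≤ i p := fun u hu => hmono u hu
    rw [coeff_partialSym, coeff_partialSym]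
    set G1 := Finset.univ.filter
      (fun σ : Equiv.Perm (Fin m) => ∀ u : Fin m, k' + 1 - 1 ≤ (u : ℕ) → σ u = u) with hG1
    set G := Finset.univ.filter
      (fun σ : Equiv.Perm (Fin m) => ∀ u : Fin m, k' + 1 ≤ (u : ℕ) → σ u = u) with hG
    set S := (Finset.univ.filter fun u : Fin m =>
        (u : ℕ) < k' + 1 ∧ i u = i ⟨k' + 1 - 1, by omega⟩) with hS
    have hpS : p ∈ S := by
      rw [hS, Finset.mem_filter]
      exact ⟨Finset.mem_univ _, Nat.lt_succ_self k', rfl⟩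
    have hNpos : S.card ≠ 0 := Finset.card_ne_zero_of_mem hpS
    -- σ p has index < k'+1 for σ ∈ G
    have hGlt : ∀ σ ∈ G, (σ p : ℕ) < k' + 1 := by
      intro σ hσ
      rw [hG, Finset.mem_filter] at hσ
      by_contra h
      push_neg at h
      have h1 := hσ.2 (σ p) h
      have h2 : p = σ p := σ.injective h1.symm
      rw [← h2] at h
      have h3 : (k' + 1 : ℕ) ≤ k' := h
      omega
    -- terms with i (σ p) ≠ i p vanish
    have hzero : ∀ σ ∈ G, i (σ p) ≠ i p → c (fun u => i (σ u)) = 0 := by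
      intro σ hσ hne'
      apply hc
      intro hmon
      have h1 : (σ p : ℕ) < k' + 1 := hGlt σ hσ
      have h2 : σ p ≠ p := fun he => hne' (by rw [he])
      have h3 : (σ p : ℕ) < k' := by
        rcases lt_or_eq_of_le (Nat.lt_succ_iff.mp h1) with h | h
        · exact h
        · exact absurd (Fin.ext h) h2
      have h4 : i (σ p) < i p := lt_of_le_of_ne (hmono' (σ p) h3) hne'
      set v := σ.symm p with hv
      have hσv : σ v = p := σ.apply_symm_apply p
      have hvne : v ≠ p := fun he => h2 (he ▸ hσv)
      have hvlt : (v : ℕ) < k' := by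
        rw [hG, Finset.mem_filter] at hσ
        by_contra hge
        push_neg at hge
        rcases lt_or_eq_of_le hge with hgt | heq
        · have h5 : (k' + 1 : ℕ) ≤ v := hgt
          have h6 := hσ.2 v h5
          rw [h6] at hσv
          exact hvne hσv
        · exact hvne (Fin.ext heq.symm)
      have hvle : v ≤ p := Fin.le_def.mpr (Nat.le_of_lt hvlt)
      have h7 := hmon hvle
      simp only [hσv] at h7
      exact absurd h7 (not_le.mpr h4)
    have hstep1 : ∑ σ ∈ G, c (fun u => i (σ u)) =
        ∑ σ ∈ G.filter (fun σ => i (σ p) = i p), c (fun u => i (σ u)) := by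
      rw [eq_comm]
      apply Finset.sum_filter_of_ne
      intro σ hσ hne
      by_contra h
      exact hne (hzero σ hσ h)
    have hswap : ∀ (a : Fin m), i a = i p → ∀ x, i (Equiv.swap a p x) = i x := by
      intro a ha x
      rcases eq_or_ne x a with rfl | hxa
      · rw [Equiv.swap_apply_left, ha]
      rcases eq_or_ne x p with rfl | hxp
      · rw [Equiv.swap_apply_right, ha]
      · rw [Equiv.swap_apply_of_ne_of_ne hxa hxp]
    have hstep2 : ∑ σ ∈ G.filter (fun σ => i (σ p) = i p), c (fun u => i (σ u)) =
        ∑ wτ ∈ S ×ˢ G1, c (fun u => i (wτ.2 u)) := by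
      apply Finset.sum_nbij' (i := fun σ => (σ p, Equiv.swap (σ p) p * σ))
        (j := fun wτ => Equiv.swap wτ.1 p * wτ.2)
      · intro σ hσ
        rw [Finset.mem_filter] at hσ
        have hσG := hσ.1
        rw [hG, Finset.mem_filter] at hσG
        rw [Finset.mem_product]
        constructor
        · rw [hS, Finset.mem_filter]
          exact ⟨Finset.mem_univ _, hGlt σ hσ.1, hσ.2⟩
        · rw [hG1, Finset.mem_filter]
          refine ⟨Finset.mem_univ _, fun u hu => ?_⟩
          have hu' : k' ≤ (u : ℕ) := hu
          rcases lt_or_eq_of_le hu' with hgt | heq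
          · have hu1 : k' + 1 ≤ (u : ℕ) := hgt
            have h1 : σ u = u := hσG.2 u hu1
            have h2 : u ≠ σ p := by
              intro he
              rw [he] at hu1
              exact absurd (hGlt σ hσ.1) (by omega)
            have h3 : u ≠ p := by
              intro he
              rw [he] at hu1
              have h4 : (k' + 1 : ℕ) ≤ k' := hu1
              omega
            simp only [Equiv.Perm.mul_apply, h1,
              Equiv.swap_apply_of_ne_of_ne h2 h3]
          · have hup : u = p := Fin.ext heq.symm
            subst hup
            simp only [Equiv.Perm.mul_apply, Equiv.swap_apply_left]
      · intro wτ hwτ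
        rw [Finset.mem_product] at hwτ
        obtain ⟨hw, hτ⟩ := hwτ
        rw [hS, Finset.mem_filter] at hw
        rw [hG1, Finset.mem_filter] at hτ
        have hwlt : (wτ.1 : ℕ) < k' + 1 := hw.2.1
        have hτp : wτ.2 p = p := hτ.2 p (Nat.le_refl k')
        rw [Finset.mem_filter]
        constructor
        · rw [hG, Finset.mem_filter]
          refine ⟨Finset.mem_univ _, fun u hu => ?_⟩
          have h1 : wτ.2 u = u := hτ.2 u (by omega)
          have h2 : u ≠ wτ.1 := by
            intro he
            rw [he] at hu
            omega
          have h3 : u ≠ p := by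
            intro he
            rw [he] at hu
            have h4 : (k' + 1 : ℕ) ≤ k' := hu
            omega
          simp only [Equiv.Perm.mul_apply, h1,
            Equiv.swap_apply_of_ne_of_ne h2 h3]
        · simp only [Equiv.Perm.mul_apply, hτp, Equiv.swap_apply_right]
          exact hw.2.2
      · intro σ hσ
        simp only
        rw [← mul_assoc, Equiv.swap_mul_self, one_mul]
      · intro wτ hwτ
        rw [Finset.mem_product] at hwτ
        obtain ⟨hw, hτ⟩ := hwτ
        rw [hG1, Finset.mem_filter] at hτ
        have hτp : wτ.2 p = p := hτ.2 p (Nat.le_refl k')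
        have h1 : (Equiv.swap wτ.1 p * wτ.2) p = wτ.1 := by
          simp only [Equiv.Perm.mul_apply, hτp, Equiv.swap_apply_right]
        simp only [h1]
        rw [← mul_assoc, Equiv.swap_mul_self, one_mul]
      · intro σ hσ
        rw [Finset.mem_filter] at hσ
        congr 1
        funext u
        simp only [Equiv.Perm.mul_apply]
        rw [hswap (σ p) hσ.2 (σ u)]
    have hstep3 : ∑ wτ ∈ S ×ˢ G1, c (fun u => i (wτ.2 u)) =
        (S.card : ℂ) * ∑ τ ∈ G1, c (fun u => i (τ u)) := by
      rw [Finset.sum_product]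
      have h1 : ∀ w ∈ S, (∑ τ ∈ G1, c (fun u => i ((Prod.mk w τ).2 u))) =
          ∑ τ ∈ G1, c (fun u => i (τ u)) := fun w _ => rfl
      rw [Finset.sum_congr rfl h1, Finset.sum_const, nsmul_eq_mul]
    rw [hstep1, hstep2, hstep3]
    have hN : (S.card : ℂ) ≠ 0 := Nat.cast_ne_zero.mpr hNpos
    have hf1 : (((k' + 1 - 1).factorial : ℕ) : ℂ) ≠ 0 :=
      Nat.cast_ne_zero.mpr (Nat.factorial_ne_zero _)
    have hfs : (((k' + 1).factorial : ℕ) : ℂ) = (k' + 1) * ((k'.factorial : ℕ) : ℂ) := by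
      rw [Nat.factorial_succ]; push_cast; ring
    have hf0 : ((k'.factorial : ℕ) : ℂ) ≠ 0 := Nat.cast_ne_zero.mpr (Nat.factorial_ne_zero _)
    have hkk : k' + 1 - 1 = k' := rfl
    have hk1' : ((k' : ℂ) + 1) ≠ 0 := by
      have : (((k' + 1 : ℕ) : ℂ)) ≠ 0 := Nat.cast_ne_zero.mpr (by omega)
      push_cast at this
      exact this
    rw [hkk, hfs]
    push_cast
    rw [div_mul_eq_mul_div, mul_inv, eq_div_iff hN]
    field_simp
  · intro hnot
    push_neg at hnot
    obtain ⟨u₀, hu₀lt, hu₀⟩ := hnot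
    rw [coeff_partialSym]
    rw [Finset.sum_eq_zero, mul_zero]
    intro σ hσ
    rw [Finset.mem_filter] at hσ
    apply hc
    intro hmon
    have hσv : σ (σ.symm u₀) = u₀ := σ.apply_symm_apply u₀
    have hσp : σ p = p := hσ.2 p (Nat.le_refl k')
    have hu₀lt' : (u₀ : ℕ) < k' := hu₀lt
    have hvlt : ((σ.symm u₀ : Fin m) : ℕ) < k' := by
      by_contra hge
      push_neg at hge
      have h1 : σ (σ.symm u₀) = σ.symm u₀ := hσ.2 _ hge
      rw [hσv] at h1
      rw [← h1] at hge
      omega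
    have hvle : σ.symm u₀ ≤ p := Fin.le_def.mpr (Nat.le_of_lt hvlt)
    have h7 := hmon hvle
    simp only [hσv, hσp] at h7
    exact absurd (lt_of_lt_of_le hu₀ h7) (lt_irrefl _)
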